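/- (Weak colorful Helly for connected covers.) Let F be a connected cover in a graph G with |F| = 20, partitioned as F = A ∪ B ∪ C with |A| = |B| = 5 and |C| = 10, such that A_i ∩ B_j ∩ C_k ≠ ∅ for every choice A_i ∈ A, B_j ∈ B, C_k ∈ C. If no four members of F have a common vertex, then G contains K_5 as a minor. -/

import Mathlib

open Finset

/-- Z/2 boundary of a chain represented as a set of simplices. -/
def bdry {V : Type} [DecidableEq V] (c : Finset (Finset V)) : Finset (Finset V) :=
  (c.sup Finset.powerset).filter fun τ =>
    Odd ((c.filter fun σ => τ ⊆ σ ∧ τ.card + 1 = σ.card).card)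

def IsChainOf {V : Type} [DecidableEq V] (K : Finset (Finset V)) (d : ℕ)
    (c : Finset (Finset V)) : Prop :=
  ∀ σ ∈ c, σ ∈ K ∧ σ.card = d + 1

/-- Reduced simplicial Z/2-homology of the complex `K` is nonzero in dimension `d`. -/
def RedHomNonzero {V : Type} [DecidableEq V] (K : Finset (Finset V)) (d : ℕ) : Prop :=
  ∃ c : Finset (Finset V), IsChainOf K d c ∧ bdry c = ∅ ∧
    ∀ b : Finset (Finset V), IsChainOf K (d + 1) b → bdry b ≠ c

/-- The nerve of a finite family of nonempty finite sets. -/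
def nerveF {V ι : Type} [DecidableEq V] [Fintype V] [Fintype ι] [DecidableEq ι]
    (F : ι → Finset V) : Finset (Finset ι) :=
  Finset.univ.filter fun σ : Finset ι => σ.Nonempty ∧ (σ.inf F).Nonempty

/-- `F` is a connected cover in `G`: a family of (vertex sets of) induced subgraphs,
all of whose nonempty intersections induce connected subgraphs. -/
def IsConnCover {V ι : Type} [DecidableEq V] [Fintype V] [Fintype ι] [DecidableEq ι]
    (G : SimpleGraph V) (F : ι → Finset V) : Prop :=
  (∀ i, (F i).Nonempty) ∧
  ∀ σ : Finset ι, σ.Nonempty → (σ.inf F).Nonempty →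
    (G.induce ((σ.inf F : Finset V) : Set V)).Connected

/-- The homological dimension of `G` is at least `d`. -/
def GammaGe {V : Type} [DecidableEq V] [Fintype V] (G : SimpleGraph V) (d : ℕ) : Prop :=
  ∃ (n : ℕ) (F : Fin n → Finset V), IsConnCover G F ∧ RedHomNonzero (nerveF F) d

/-- The homological dimension of `G` equals the integer `m`:
`m` is the greatest `d` with `GammaGe G d` (and `m = -1` when there is none). -/
def HomDimEq {V : Type} [DecidableEq V] [Fintype V] (G : SimpleGraph V) (m : ℤ) : Prop :=
  (∀ d : ℕ, m < (d : ℤ) → ¬ GammaGe G d) ∧ (∀ d : ℕ, (d : ℤ) = m → GammaGe G d)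

/-- `H` is a minor of `G`. -/
def IsMinor {W V : Type} [Fintype W] [DecidableEq W] [Fintype V] [DecidableEq V]
    (H : SimpleGraph W) (G : SimpleGraph V) : Prop :=
  ∃ B : W → Finset V,
    (∀ w, (B w).Nonempty) ∧
    (∀ u w, u ≠ w → Disjoint (B u) (B w)) ∧
    (∀ w, (G.induce ((B w : Finset V) : Set V)).Connected) ∧
    (∀ u w, H.Adj u w → ∃ a ∈ B u, ∃ b ∈ B w, G.Adj a b)


section Helpers

variable {V : Type} (G : SimpleGraph V)

lemma exists_adj_helper {s p : Set V} (hs : (G.induce s).Connected) (hps : p ⊆ s)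
    (hp : p.Nonempty) (hq : (s \ p).Nonempty) :
    ∃ a ∈ p, ∃ b ∈ s \ p, G.Adj a b := by
  obtain ⟨a, ha⟩ := hp
  obtain ⟨b, hb⟩ := hq
  obtain ⟨w⟩ := hs.preconnected ⟨a, hps ha⟩ ⟨b, hb.1⟩
  obtain ⟨d, _, hdf, hds⟩ := w.exists_boundary_dart (Subtype.val ⁻¹' p) ha hb.2
  exact ⟨d.fst, hdf, d.snd, ⟨(d.snd : ↥s).2, hds⟩, d.adj⟩

lemma exists_component_finset [Fintype V] [DecidableEq V]
    (s : Finset V) {v₀ : V} (h₀ : v₀ ∈ s) :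
    ∃ K : Finset V, K ⊆ s ∧ v₀ ∈ K ∧ (G.induce (↑K : Set V)).Connected ∧
      (∀ x ∈ K, ∀ u ∈ s, G.Adj x u → u ∈ K) := by
  classical
  have h₀' : v₀ ∈ (↑s : Set V) := h₀
  set K : Set V := {v | ∃ hv : v ∈ (↑s : Set V),
    (G.induce (↑s : Set V)).Reachable ⟨v₀, h₀'⟩ ⟨v, hv⟩} with hKdef
  have hKs : K ⊆ (↑s : Set V) := fun v hv => hv.1
  have hv₀K : v₀ ∈ K := ⟨h₀', SimpleGraph.Reachable.refl _⟩
  have hcl : ∀ x ∈ K, ∀ u ∈ s, G.Adj x u → u ∈ K := by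
    rintro x ⟨hxs, hxr⟩ u hu hadj
    have hus : u ∈ (↑s : Set V) := hu
    have : (G.induce (↑s : Set V)).Adj ⟨x, hxs⟩ ⟨u, hus⟩ := hadj
    exact ⟨hus, hxr.trans this.reachable⟩
  have key : ∀ (x y : ↥(↑s : Set V)) (w : (G.induce (↑s : Set V)).Walk x y)
      (hx : ↑x ∈ K), ∃ hy : ↑y ∈ K, (G.induce K).Reachable ⟨↑x, hx⟩ ⟨↑y, hy⟩ := by
    intro x y w
    induction w with
    | nil => exact fun hx => ⟨hx, SimpleGraph.Reachable.refl _⟩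
    | @cons x z y h w ih =>
      intro hx
      have hz : ↑z ∈ K := hcl _ hx _ z.2 h
      obtain ⟨hy, r⟩ := ih hz
      exact ⟨hy, ((show (G.induce K).Adj ⟨↑x, hx⟩ ⟨↑z, hz⟩ from h).reachable).trans r⟩
  have hKconn : (G.induce K).Connected := by
    rw [SimpleGraph.connected_iff]
    refine ⟨?_, ⟨⟨v₀, hv₀K⟩⟩⟩
    rintro ⟨u, hu⟩ ⟨w, hw⟩
    obtain ⟨hus, hur⟩ := hu
    obtain ⟨hws, hwr⟩ := hw
    obtain ⟨wu⟩ := hur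
    obtain ⟨ww⟩ := hwr
    obtain ⟨_, ru⟩ := key _ _ wu hv₀K
    obtain ⟨_, rw'⟩ := key _ _ ww hv₀K
    exact ru.symm.trans rw'
  refine ⟨Set.Finite.toFinset (Set.toFinite K), ?_, ?_, ?_, ?_⟩
  · intro v hv; exact hKs ((Set.Finite.mem_toFinset _).1 hv)
  · exact (Set.Finite.mem_toFinset _).2 hv₀K
  · rwa [Set.Finite.coe_toFinset]
  · intro x hx u hu hadj; simp only [Set.Finite.mem_toFinset] at hx ⊢
    exact hcl x hx u hu hadj

lemma conn_union_biUnion [DecidableEq V] {ι' : Type} [DecidableEq ι'] (c : Finset V)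
    (t : Finset ι') (f : ι' → Finset V)
    (hc : (G.induce (↑c : Set V)).Connected)
    (hf : ∀ j ∈ t, f j = ∅ ∨
      ((G.induce (↑(f j) : Set V)).Connected ∧ (c ∩ f j).Nonempty)) :
    (G.induce (↑(c ∪ t.biUnion f) : Set V)).Connected := by
  induction t using Finset.induction with
  | empty => rw [Finset.biUnion_empty, Finset.union_empty]; exact hc
  | @insert a t ha ih =>
    have ih' := ih (fun j hj => hf j (Finset.mem_insert_of_mem hj))
    have hre : c ∪ (insert a t).biUnion f = (c ∪ t.biUnion f) ∪ f a := by
      rw [Finset.biUnion_insert, Finset.union_left_comm, Finset.union_comm (f a)]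
    rcases hf a (Finset.mem_insert_self a t) with h0 | ⟨hconn, hne⟩
    · rw [hre, h0, Finset.union_empty]; exact ih'
    · rw [hre, Finset.coe_union]
      refine SimpleGraph.induce_union_connected ih'.preconnected hconn.preconnected ?_
      obtain ⟨v, hv⟩ := hne
      simp only [Finset.mem_inter] at hv
      exact ⟨v, by simp [hv.1], by simp [hv.2]⟩

end Helpers

/-- pairing function: injective on pairs `i < j`. -/
def pk (i j : Fin 5) : Fin 10 :=
  ⟨((j.val * (j.val - 1)) / 2 + i.val) % 10, Nat.mod_lt _ (by norm_num)⟩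

lemma pk_inj : ∀ i j i' j' : Fin 5, i < j → i' < j' → pk i j = pk i' j' →
    i = i' ∧ j = j' := by decide

/-- weak colorful Helly: let `F = A ∪ B ∪ C` be a connected cover in `G`
consisting of 20 distinct members with `|A| = |B| = 5`, `|C| = 10`, such that every
colorful triple `A_i ∩ B_j ∩ C_k` is nonempty.  If no four members of `F` have a common
vertex, then `G` has a `K₅` minor. -/
theorem stmt17 {V : Type} [Fintype V] [DecidableEq V] (G : SimpleGraph V)
    (A B : Fin 5 → Finset V) (C : Fin 10 → Finset V)
    (hinj : Function.Injective (Sum.elim A (Sum.elim B C)))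
    (hcov : IsConnCover G (Sum.elim A (Sum.elim B C)))
    (hcolor : ∀ i j k, (A i ∩ B j ∩ C k).Nonempty)
    (h4 : ∀ s : Finset (Fin 5 ⊕ Fin 5 ⊕ Fin 10), s.card = 4 →
      s.inf (Sum.elim A (Sum.elim B C)) = ∅) :
    IsMinor (⊤ : SimpleGraph (Fin 5)) G := by
  classical
  set F : Fin 5 ⊕ Fin 5 ⊕ Fin 10 → Finset V := Sum.elim A (Sum.elim B C) with hF
  -- quadruple intersections are empty
  have e4v : ∀ w x y z : Fin 5 ⊕ Fin 5 ⊕ Fin 10, w ≠ x → w ≠ y → w ≠ z → x ≠ y → x ≠ z →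
      y ≠ z → ∀ v : V, v ∈ F w → v ∈ F x → v ∈ F y → v ∈ F z → False := by
    intro w x y z h1 h2 h3 h5 h6 h7 v hw hx hy hz
    have hcard : ({w, x, y, z} : Finset (Fin 5 ⊕ Fin 5 ⊕ Fin 10)).card = 4 := by
      rw [Finset.card_insert_of_notMem (by simp [h1, h2, h3]),
        Finset.card_insert_of_notMem (by simp [h5, h6]),
        Finset.card_insert_of_notMem (by simp [h7]), Finset.card_singleton]
    have h := h4 {w, x, y, z} hcard
    have hv : v ∈ ({w, x, y, z} : Finset (Fin 5 ⊕ Fin 5 ⊕ Fin 10)).inf F := by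
      rw [Finset.inf_insert, Finset.inf_insert, Finset.inf_insert, Finset.inf_singleton]
      simp only [Finset.inf_eq_inter, Finset.mem_inter]
      exact ⟨hw, hx, hy, hz⟩
    rw [h] at hv
    exact absurd hv (Finset.notMem_empty v)
  -- pairwise intersections are connected
  have conn2 : ∀ x y : Fin 5 ⊕ Fin 5 ⊕ Fin 10, (F x ∩ F y).Nonempty →
      (G.induce (↑(F x ∩ F y) : Set V)).Connected := by
    intro x y hne
    have hinf : ({x, y} : Finset (Fin 5 ⊕ Fin 5 ⊕ Fin 10)).inf F = F x ∩ F y := by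
      rw [Finset.inf_insert, Finset.inf_singleton]; rfl
    have := hcov.2 {x, y} ⟨x, by simp⟩ (by rw [hinf]; exact hne)
    rwa [hinf] at this
  choose t ht using hcolor
  have htA : ∀ i j k, t i j k ∈ A i := by
    intro i j k; have h := ht i j k; simp only [Finset.mem_inter] at h; exact h.1.1
  have htB : ∀ i j k, t i j k ∈ B j := by
    intro i j k; have h := ht i j k; simp only [Finset.mem_inter] at h; exact h.1.2
  have htC : ∀ i j k, t i j k ∈ C k := by
    intro i j k; have h := ht i j k; simp only [Finset.mem_inter] at h; exact h.2
  -- membership wrappers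
  have mA : ∀ (i : Fin 5) (v : V), v ∈ A i → v ∈ F (Sum.inl i) := by
    intro i v h; simpa [hF] using h
  have mB : ∀ (j : Fin 5) (v : V), v ∈ B j → v ∈ F (Sum.inr (Sum.inl j)) := by
    intro j v h; simpa [hF] using h
  have mC : ∀ (k : Fin 10) (v : V), v ∈ C k → v ∈ F (Sum.inr (Sum.inr k)) := by
    intro k v h; simpa [hF] using h
  -- ne wrappers
  have nAB : ∀ (i j : Fin 5), (Sum.inl i : Fin 5 ⊕ Fin 5 ⊕ Fin 10) ≠ Sum.inr (Sum.inl j) := by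
    intro i j; simp
  have nAC : ∀ (i : Fin 5) (k : Fin 10),
      (Sum.inl i : Fin 5 ⊕ Fin 5 ⊕ Fin 10) ≠ Sum.inr (Sum.inr k) := by intro i k; simp
  have nBC : ∀ (j : Fin 5) (k : Fin 10),
      (Sum.inr (Sum.inl j) : Fin 5 ⊕ Fin 5 ⊕ Fin 10) ≠ Sum.inr (Sum.inr k) := by
    intro j k; simp
  have nAA : ∀ i i' : Fin 5, i ≠ i' →
      (Sum.inl i : Fin 5 ⊕ Fin 5 ⊕ Fin 10) ≠ Sum.inl i' := by
    intro i i' h; simpa using h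
  have nBB : ∀ j j' : Fin 5, j ≠ j' →
      (Sum.inr (Sum.inl j) : Fin 5 ⊕ Fin 5 ⊕ Fin 10) ≠ Sum.inr (Sum.inl j') := by
    intro j j' h; simpa using h
  have nCC : ∀ k k' : Fin 10, k ≠ k' →
      (Sum.inr (Sum.inr k) : Fin 5 ⊕ Fin 5 ⊕ Fin 10) ≠ Sum.inr (Sum.inr k') := by
    intro k k' h; simpa using h
  -- connectivity of pieces
  have connAB : ∀ i : Fin 5, (G.induce (↑(A i ∩ B i) : Set V)).Connected := by
    intro i
    have h := conn2 (Sum.inl i) (Sum.inr (Sum.inl i))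
      ⟨t i i 0, Finset.mem_inter.2 ⟨mA i _ (htA i i 0), mB i _ (htB i i 0)⟩⟩
    exact h
  have connAC : ∀ (i : Fin 5) (k : Fin 10),
      (G.induce (↑(A i ∩ C k) : Set V)).Connected := by
    intro i k
    have h := conn2 (Sum.inl i) (Sum.inr (Sum.inr k))
      ⟨t i 0 k, Finset.mem_inter.2 ⟨mA i _ (htA i 0 k), mC k _ (htC i 0 k)⟩⟩
    exact h
  have connBC : ∀ (i : Fin 5) (k : Fin 10),
      (G.induce (↑(B i ∩ C k) : Set V)).Connected := by
    intro i k
    have h := conn2 (Sum.inr (Sum.inl i)) (Sum.inr (Sum.inr k))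
      ⟨t 0 i k, Finset.mem_inter.2 ⟨mB i _ (htB 0 i k), mC k _ (htC 0 i k)⟩⟩
    exact h
  -- ambient sets for components
  set χ : Fin 5 → Fin 5 → Finset V :=
    fun i j => insert (t i i (pk i j)) ((A i ∩ C (pk i j)) \ B j) with hχ
  have hχeq : ∀ i j : Fin 5, i ≠ j → χ i j = (A i ∩ C (pk i j)) \ B j := by
    intro i j hij
    apply Finset.insert_eq_self.mpr
    simp only [Finset.mem_sdiff, Finset.mem_inter]
    refine ⟨⟨htA i i _, htC i i _⟩, fun hB => ?_⟩
    exact e4v (Sum.inl i) (Sum.inr (Sum.inl i)) (Sum.inr (Sum.inl j))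
      (Sum.inr (Sum.inr (pk i j))) (nAB i i) (nAB i j) (nAC i _) (nBB i j hij)
      (nBC i _) (nBC j _) (t i i (pk i j))
      (mA i _ (htA i i _)) (mB i _ (htB i i _)) (mB j _ hB) (mC _ _ (htC i i _))
  have hv0χ : ∀ i j, t i i (pk i j) ∈ χ i j := fun i j => Finset.mem_insert_self _ _
  choose Y hYsub hYv0 hYconn hYcl using fun i j : Fin 5 =>
    exists_component_finset G (χ i j) (hv0χ i j)
  have hYprop : ∀ i j : Fin 5, i ≠ j → ∀ v ∈ Y i j,
      v ∈ A i ∧ v ∈ C (pk i j) ∧ v ∉ B j := by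
    intro i j hij v hv
    have h := hYsub i j hv
    rw [hχeq i j hij] at h
    simp only [Finset.mem_sdiff, Finset.mem_inter] at h
    exact ⟨h.1.1, h.1.2, h.2⟩
  set g : Fin 5 → Fin 5 → Finset V :=
    fun i j => if i < j then Y i j else if j < i then B i ∩ C (pk j i) else ∅ with hg
  set W : Fin 5 → Finset V := fun i => (A i ∩ B i) ∪ Finset.univ.biUnion (g i) with hW
  have hgY : ∀ i j : Fin 5, i < j → g i j = Y i j := by
    intro i j h; simp [hg, h]
  have hgP : ∀ i j : Fin 5, j < i → g i j = B i ∩ C (pk j i) := by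
    intro i j h; simp [hg, h, asymm h]
  have hmemW : ∀ (i : Fin 5) (v : V), v ∈ W i ↔
      (v ∈ A i ∧ v ∈ B i) ∨ (∃ l, i < l ∧ v ∈ Y i l) ∨
      (∃ l, l < i ∧ v ∈ B i ∧ v ∈ C (pk l i)) := by
    intro i v
    constructor
    · intro hv
      rcases Finset.mem_union.1 hv with h | h
      · exact Or.inl (Finset.mem_inter.1 h)
      · obtain ⟨l, -, hl⟩ := Finset.mem_biUnion.1 h
        rcases lt_trichotomy i l with h1 | h1 | h1
        · rw [hgY i l h1] at hl; exact Or.inr (Or.inl ⟨l, h1, hl⟩)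
        · exfalso; rw [← h1] at hl; simp [hg] at hl
        · rw [hgP i l h1] at hl
          obtain ⟨hb, hc⟩ := Finset.mem_inter.1 hl
          exact Or.inr (Or.inr ⟨l, h1, hb, hc⟩)
    · intro hv
      rcases hv with ⟨h1, h2⟩ | ⟨l, hl, hmem⟩ | ⟨l, hl, hb, hc⟩
      · exact Finset.mem_union_left _ (Finset.mem_inter.2 ⟨h1, h2⟩)
      · exact Finset.mem_union_right _ (Finset.mem_biUnion.2
          ⟨l, Finset.mem_univ l, by rw [hgY i l hl]; exact hmem⟩)
      · exact Finset.mem_union_right _ (Finset.mem_biUnion.2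
          ⟨l, Finset.mem_univ l, by rw [hgP i l hl]; exact Finset.mem_inter.2 ⟨hb, hc⟩⟩)
  refine ⟨W, ?_, ?_, ?_, ?_⟩
  · -- nonempty
    intro i
    exact ⟨t i i 0, (hmemW i _).2 (Or.inl ⟨htA i i 0, htB i i 0⟩)⟩
  · -- disjoint
    intro u w huw
    rw [Finset.disjoint_left]
    intro v hvu hvw
    rcases (hmemW u v).1 hvu with ⟨ha1, hb1⟩ | ⟨l, hl, hy1⟩ | ⟨l, hl, hb1, hc1⟩ <;>
      rcases (hmemW w v).1 hvw with ⟨ha2, hb2⟩ | ⟨m, hm, hy2⟩ | ⟨m, hm, hb2, hc2⟩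
    · exact e4v (Sum.inl u) (Sum.inr (Sum.inl u)) (Sum.inl w) (Sum.inr (Sum.inl w))
        (nAB u u) (nAA u w huw) (nAB u w) ((nAB w u).symm) (nBB u w huw) (nAB w w) v
        (mA u v ha1) (mB u v hb1) (mA w v ha2) (mB w v hb2)
    · have hp2 := hYprop w m (ne_of_lt hm) v hy2
      exact e4v (Sum.inl u) (Sum.inr (Sum.inl u)) (Sum.inl w) (Sum.inr (Sum.inr (pk w m)))
        (nAB u u) (nAA u w huw) (nAC u _) ((nAB w u).symm) (nBC u _) (nAC w _) v
        (mA u v ha1) (mB u v hb1) (mA w v hp2.1) (mC _ v hp2.2.1)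
    · exact e4v (Sum.inl u) (Sum.inr (Sum.inl u)) (Sum.inr (Sum.inl w))
        (Sum.inr (Sum.inr (pk m w)))
        (nAB u u) (nAB u w) (nAC u _) (nBB u w huw) (nBC u _) (nBC w _) v
        (mA u v ha1) (mB u v hb1) (mB w v hb2) (mC _ v hc2)
    · have hp1 := hYprop u l (ne_of_lt hl) v hy1
      exact e4v (Sum.inl u) (Sum.inr (Sum.inr (pk u l))) (Sum.inl w) (Sum.inr (Sum.inl w))
        (nAC u _) (nAA u w huw) (nAB u w) ((nAC w _).symm) ((nBC w _).symm) (nAB w w) v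
        (mA u v hp1.1) (mC _ v hp1.2.1) (mA w v ha2) (mB w v hb2)
    · have hp1 := hYprop u l (ne_of_lt hl) v hy1
      have hp2 := hYprop w m (ne_of_lt hm) v hy2
      by_cases hk : pk u l = pk w m
      · obtain ⟨he, -⟩ := pk_inj u l w m hl hm hk
        exact huw he
      · exact e4v (Sum.inl u) (Sum.inl w) (Sum.inr (Sum.inr (pk u l)))
          (Sum.inr (Sum.inr (pk w m)))
          (nAA u w huw) (nAC u _) (nAC u _) (nAC w _) (nAC w _) (nCC _ _ hk) v
          (mA u v hp1.1) (mA w v hp2.1) (mC _ v hp1.2.1) (mC _ v hp2.2.1)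
    · have hp1 := hYprop u l (ne_of_lt hl) v hy1
      by_cases hk : pk u l = pk m w
      · obtain ⟨h1', h2'⟩ := pk_inj u l m w hl hm hk
        exact hp1.2.2 (by rw [h2']; exact hb2)
      · exact e4v (Sum.inl u) (Sum.inr (Sum.inr (pk u l))) (Sum.inr (Sum.inl w))
          (Sum.inr (Sum.inr (pk m w)))
          (nAC u _) (nAB u w) (nAC u _) ((nBC w _).symm) (nCC _ _ hk) (nBC w _) v
          (mA u v hp1.1) (mC _ v hp1.2.1) (mB w v hb2) (mC _ v hc2)
    · exact e4v (Sum.inr (Sum.inl u)) (Sum.inr (Sum.inr (pk l u))) (Sum.inl w)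
        (Sum.inr (Sum.inl w))
        (nBC u _) ((nAB w u).symm) (nBB u w huw) ((nAC w _).symm) ((nBC w _).symm)
        (nAB w w) v (mB u v hb1) (mC _ v hc1) (mA w v ha2) (mB w v hb2)
    · have hp2 := hYprop w m (ne_of_lt hm) v hy2
      by_cases hk : pk w m = pk l u
      · obtain ⟨-, h2'⟩ := pk_inj w m l u hm hl hk
        exact hp2.2.2 (by rw [h2']; exact hb1)
      · exact e4v (Sum.inr (Sum.inl u)) (Sum.inr (Sum.inr (pk l u))) (Sum.inl w)
          (Sum.inr (Sum.inr (pk w m)))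
          (nBC u _) ((nAB w u).symm) (nBC u _) ((nAC w _).symm) (nCC _ _ (Ne.symm hk))
          (nAC w _) v (mB u v hb1) (mC _ v hc1) (mA w v hp2.1) (mC _ v hp2.2.1)
    · by_cases hk : pk l u = pk m w
      · obtain ⟨-, he⟩ := pk_inj l u m w hl hm hk
        exact huw he
      · exact e4v (Sum.inr (Sum.inl u)) (Sum.inr (Sum.inr (pk l u))) (Sum.inr (Sum.inl w))
          (Sum.inr (Sum.inr (pk m w)))
          (nBC u _) (nBB u w huw) (nBC u _) ((nBC w _).symm) (nCC _ _ hk) (nBC w _) v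
          (mB u v hb1) (mC _ v hc1) (mB w v hb2) (mC _ v hc2)
  · -- connected
    intro i
    show (G.induce (↑((A i ∩ B i) ∪ Finset.univ.biUnion (g i)) : Set V)).Connected
    refine conn_union_biUnion G _ _ _ (connAB i) ?_
    intro j hj
    rcases lt_trichotomy i j with h1 | h1 | h1
    · right
      rw [hgY i j h1]
      exact ⟨hYconn i j, ⟨t i i (pk i j), Finset.mem_inter.2
        ⟨Finset.mem_inter.2 ⟨htA i i _, htB i i _⟩, hYv0 i j⟩⟩⟩
    · left; rw [← h1]; simp [hg]
    · right
      rw [hgP i j h1]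
      exact ⟨connBC i (pk j i), ⟨t i i (pk j i), Finset.mem_inter.2
        ⟨Finset.mem_inter.2 ⟨htA i i _, htB i i _⟩,
         Finset.mem_inter.2 ⟨htB i i _, htC i i _⟩⟩⟩⟩
  · -- edges
    have edge : ∀ i j : Fin 5, i < j → ∃ a ∈ W i, ∃ b ∈ W j, G.Adj a b := by
      intro i j hij
      have hijne : i ≠ j := ne_of_lt hij
      have hsconn := connAC i (pk i j)
      have hYs : (↑(Y i j) : Set V) ⊆ (↑(A i ∩ C (pk i j)) : Set V) := by
        intro v hv
        have h := hYprop i j hijne v (by exact_mod_cast hv)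
        simp only [Finset.coe_inter, Set.mem_inter_iff]
        exact ⟨h.1, h.2.1⟩
      have hpne : (↑(Y i j) : Set V).Nonempty :=
        ⟨t i i (pk i j), by exact_mod_cast hYv0 i j⟩
      have hqne : ((↑(A i ∩ C (pk i j)) : Set V) \ (↑(Y i j) : Set V)).Nonempty := by
        refine ⟨t i j (pk i j), ?_, ?_⟩
        · exact_mod_cast Finset.mem_inter.2 ⟨htA i j _, htC i j _⟩
        · intro hmem
          exact (hYprop i j hijne _ (by exact_mod_cast hmem)).2.2 (htB i j _)
      obtain ⟨a, haY, b, hb, hab⟩ := exists_adj_helper G hsconn hYs hpne hqne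
      have haY' : a ∈ Y i j := by exact_mod_cast haY
      have hbs : b ∈ A i ∩ C (pk i j) := by exact_mod_cast hb.1
      have hbY : b ∉ Y i j := fun hc => hb.2 (by exact_mod_cast hc)
      have hbB : b ∈ B j := by
        by_contra hbB
        apply hbY
        apply hYcl i j a haY' b ?_ hab
        rw [hχeq i j hijne]
        exact Finset.mem_sdiff.2 ⟨hbs, hbB⟩
      refine ⟨a, ?_, b, ?_, hab⟩
      · exact (hmemW i a).2 (Or.inr (Or.inl ⟨j, hij, haY'⟩))
      · exact (hmemW j b).2 (Or.inr (Or.inr ⟨i, hij, hbB, (Finset.mem_inter.1 hbs).2⟩))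
    intro u w hadj
    have hne : u ≠ w := hadj.ne
    rcases hne.lt_or_gt with h | h
    · exact edge u w h
    · obtain ⟨a, ha, b, hb, hab⟩ := edge w u h
      exact ⟨b, hb, a, ha, hab.symm⟩
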